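/- Fix nonnegative integers a, b and set n = a+b. Let S be the set of words s = (s_1,…,s_n) ∈ {−1,+1}^n with exactly a letters equal to −1 and b letters equal to +1, let C_L : S → S be the leftward cyclic shift sending (s_1,s_2,…,s_n) to (s_2,…,s_n,s_1), and let inv(s) = #{(i,j) : 1 ≤ i < j ≤ n, s_i > s_j}. Then for every C_L-orbit O ⊆ S, (1/#O)·Σ_{s∈O} inv(s) = ab/2; i.e., the inversion statistic is ab/2-mesic under cyclic rotation. -/

import Mathlib

open Finset
open Fin.NatCast

private lemma core_count {m : ℕ} (a b : ℕ) (s : Fin (m+1) → ℤ)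
    (hs : ∀ i, s i = 1 ∨ s i = -1)
    (ha : (Finset.univ.filter (fun i => s i = -1)).card = a)
    (hb : (Finset.univ.filter (fun i => s i = 1)).card = b) :
    2 * ∑ κ : Fin (m+1), ∑ p : Fin (m+1), ∑ q : Fin (m+1),
        (if p < q ∧ s (p + κ) = 1 ∧ s (q + κ) = -1 then (1:ℕ) else 0)
      = (m+1) * (b * a) := by
  -- translation count lemmas
  have hcnt1R : ∀ κ : Fin (m+1), (∑ q : Fin (m+1), if s (q + κ) = 1 then (1:ℕ) else 0) = b := by
    intro κ
    rw [show (∑ q : Fin (m+1), if s (q + κ) = 1 then (1:ℕ) else 0)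
        = ∑ q : Fin (m+1), if s q = 1 then (1:ℕ) else 0 from
      Fintype.sum_equiv (Equiv.addRight κ) (fun q => if s (q + κ) = 1 then (1:ℕ) else 0)
        (fun q => if s q = 1 then (1:ℕ) else 0) (fun q => rfl)]
    rw [← Finset.card_filter]; exact hb
  have hcntaR : ∀ κ : Fin (m+1), (∑ q : Fin (m+1), if s (q + κ) = -1 then (1:ℕ) else 0) = a := by
    intro κ
    rw [show (∑ q : Fin (m+1), if s (q + κ) = -1 then (1:ℕ) else 0)
        = ∑ q : Fin (m+1), if s q = -1 then (1:ℕ) else 0 from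
      Fintype.sum_equiv (Equiv.addRight κ) (fun q => if s (q + κ) = -1 then (1:ℕ) else 0)
        (fun q => if s q = -1 then (1:ℕ) else 0) (fun q => rfl)]
    rw [← Finset.card_filter]; exact ha
  have hcnt1L : ∀ p : Fin (m+1), (∑ κ : Fin (m+1), if s (p + κ) = 1 then (1:ℕ) else 0) = b := by
    intro p
    rw [show (∑ κ : Fin (m+1), if s (p + κ) = 1 then (1:ℕ) else 0)
        = ∑ κ : Fin (m+1), if s κ = 1 then (1:ℕ) else 0 from
      Fintype.sum_equiv (Equiv.addLeft p) (fun κ => if s (p + κ) = 1 then (1:ℕ) else 0)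
        (fun κ => if s κ = 1 then (1:ℕ) else 0) (fun κ => rfl)]
    rw [← Finset.card_filter]; exact hb
  set SA := ∑ κ : Fin (m+1), ∑ p : Fin (m+1), ∑ q : Fin (m+1),
      (if p < q ∧ s (p + κ) = 1 ∧ s (q + κ) = -1 then (1:ℕ) else 0) with hSA
  set SB := ∑ κ : Fin (m+1), ∑ p : Fin (m+1), ∑ q : Fin (m+1),
      (if p < q ∧ s (p + κ) = -1 ∧ s (q + κ) = 1 then (1:ℕ) else 0) with hSB
  set ST := ∑ κ : Fin (m+1), ∑ p : Fin (m+1), ∑ q : Fin (m+1),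
      (if p < q ∧ s (p + κ) = 1 ∧ s (q + κ) = 1 then (1:ℕ) else 0) with hST
  -- Claim 2 : SA = SB
  have hC1 : SA + ST = ∑ κ : Fin (m+1), ∑ p : Fin (m+1), ∑ q : Fin (m+1),
      (if p < q ∧ s (p + κ) = 1 then (1:ℕ) else 0) := by
    rw [hSA, hST, ← Finset.sum_add_distrib]
    refine Finset.sum_congr rfl fun κ _ => ?_
    rw [← Finset.sum_add_distrib]
    refine Finset.sum_congr rfl fun p _ => ?_
    rw [← Finset.sum_add_distrib]
    refine Finset.sum_congr rfl fun q _ => ?_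
    rcases hs (q + κ) with h | h <;> simp [h]
  have hC2 : SB + ST = ∑ κ : Fin (m+1), ∑ p : Fin (m+1), ∑ q : Fin (m+1),
      (if p < q ∧ s (q + κ) = 1 then (1:ℕ) else 0) := by
    rw [hSB, hST, ← Finset.sum_add_distrib]
    refine Finset.sum_congr rfl fun κ _ => ?_
    rw [← Finset.sum_add_distrib]
    refine Finset.sum_congr rfl fun p _ => ?_
    rw [← Finset.sum_add_distrib]
    refine Finset.sum_congr rfl fun q _ => ?_
    rcases hs (p + κ) with h | h <;> simp [h]
  have hC1' : (∑ κ : Fin (m+1), ∑ p : Fin (m+1), ∑ q : Fin (m+1),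
      (if p < q ∧ s (p + κ) = 1 then (1:ℕ) else 0))
      = ∑ p : Fin (m+1), ∑ q : Fin (m+1), (if p < q then (1:ℕ) else 0) * b := by
    rw [Finset.sum_comm]
    refine Finset.sum_congr rfl fun p _ => ?_
    rw [Finset.sum_comm]
    refine Finset.sum_congr rfl fun q _ => ?_
    by_cases hpq : p < q
    · simp only [hpq, true_and, if_true, one_mul]
      exact hcnt1L p
    · simp [hpq]
  have hC2' : (∑ κ : Fin (m+1), ∑ p : Fin (m+1), ∑ q : Fin (m+1),
      (if p < q ∧ s (q + κ) = 1 then (1:ℕ) else 0))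
      = ∑ p : Fin (m+1), ∑ q : Fin (m+1), (if p < q then (1:ℕ) else 0) * b := by
    rw [Finset.sum_comm]
    refine Finset.sum_congr rfl fun p _ => ?_
    rw [Finset.sum_comm]
    refine Finset.sum_congr rfl fun q _ => ?_
    by_cases hpq : p < q
    · simp only [hpq, true_and, if_true, one_mul]
      exact hcnt1L q
    · simp [hpq]
  have hAB : SA = SB := by
    have := hC1.trans (hC1'.trans hC2'.symm) |>.trans hC2.symm
    omega
  -- Claim 1 : per κ, Aκ + Bκ = b * a
  have hclaim1 : ∀ κ : Fin (m+1),
      (∑ p : Fin (m+1), ∑ q : Fin (m+1),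
        (if p < q ∧ s (p + κ) = 1 ∧ s (q + κ) = -1 then (1:ℕ) else 0))
      + (∑ p : Fin (m+1), ∑ q : Fin (m+1),
        (if p < q ∧ s (p + κ) = -1 ∧ s (q + κ) = 1 then (1:ℕ) else 0))
      = b * a := by
    intro κ
    have key : ∑ p : Fin (m+1), ∑ q : Fin (m+1),
        (if s (p + κ) = 1 ∧ s (q + κ) = -1 then (1:ℕ) else 0)
        = (∑ p : Fin (m+1), ∑ q : Fin (m+1),
          (if p < q ∧ s (p + κ) = 1 ∧ s (q + κ) = -1 then (1:ℕ) else 0))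
        + (∑ p : Fin (m+1), ∑ q : Fin (m+1),
          (if q < p ∧ s (p + κ) = 1 ∧ s (q + κ) = -1 then (1:ℕ) else 0)) := by
      rw [← Finset.sum_add_distrib]
      refine Finset.sum_congr rfl fun p _ => ?_
      rw [← Finset.sum_add_distrib]
      refine Finset.sum_congr rfl fun q _ => ?_
      by_cases hP : s (p + κ) = 1 ∧ s (q + κ) = -1
      · have hne : p ≠ q := by
          intro h; rw [h] at hP; rw [hP.1] at hP; exact absurd hP.2 (by norm_num)
        rcases lt_or_gt_of_ne hne with h | h
        · simp [hP, h, asymm h]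
        · simp [hP, h, asymm h]
      · simp [hP, fun h1 h2 => hP ⟨h1, h2⟩]
    have swap : (∑ p : Fin (m+1), ∑ q : Fin (m+1),
          (if q < p ∧ s (p + κ) = 1 ∧ s (q + κ) = -1 then (1:ℕ) else 0))
        = ∑ p : Fin (m+1), ∑ q : Fin (m+1),
          (if p < q ∧ s (p + κ) = -1 ∧ s (q + κ) = 1 then (1:ℕ) else 0) := by
      rw [Finset.sum_comm]
      refine Finset.sum_congr rfl fun p _ => Finset.sum_congr rfl fun q _ => ?_
      exact if_congr (by tauto) rfl rfl
    have prodct : ∑ p : Fin (m+1), ∑ q : Fin (m+1),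
        (if s (p + κ) = 1 ∧ s (q + κ) = -1 then (1:ℕ) else 0) = b * a := by
      have : ∀ p : Fin (m+1), (∑ q : Fin (m+1),
          (if s (p + κ) = 1 ∧ s (q + κ) = -1 then (1:ℕ) else 0))
          = (if s (p + κ) = 1 then (1:ℕ) else 0) * a := by
        intro p
        by_cases h : s (p + κ) = 1
        · simp only [h, true_and, if_true, one_mul]
          exact hcntaR κ
        · simp [h]
      rw [Finset.sum_congr rfl fun p _ => this p, ← Finset.sum_mul, hcnt1R κ]
    omega
  have : SA + SB = (m+1) * (b * a) := by
    rw [hSA, hSB, ← Finset.sum_add_distrib]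
    rw [Finset.sum_congr rfl fun κ _ => hclaim1 κ]
    simp [Finset.sum_const, Finset.card_univ, mul_comm]
  omega
theorem multiset_inversions_cyclic_homomesy
    (a b : ℕ) (n : ℕ) (hn : n = a + b)
    (τ : (Fin n → ℤ) → (Fin n → ℤ))
    (hτ : ∀ (s : Fin n → ℤ) (i : Fin n), τ s i = s (finRotate n i))
    (inv : (Fin n → ℤ) → ℕ)
    (hinv : ∀ s : Fin n → ℤ, inv s =
      (Finset.univ.filter (fun p : Fin n × Fin n => p.1 < p.2 ∧ s p.2 < s p.1)).card)
    (O : Finset (Fin n → ℤ))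
    (hO : ∃ s : Fin n → ℤ,
      (∀ i, s i = 1 ∨ s i = -1) ∧
      (Finset.univ.filter (fun i => s i = -1)).card = a ∧
      (Finset.univ.filter (fun i => s i = 1)).card = b ∧
      (∀ y, y ∈ O ↔ ∃ k : ℕ, τ^[k] s = y)) :
    (∑ s ∈ O, (inv s : ℚ)) / O.card = (a : ℚ) * (b : ℚ) / 2 := by
  rcases n with _ | m
  · -- n = 0 : a = 0, every inv is 0
    have ha0 : a = 0 := by omega
    have hz : ∀ y ∈ O, (inv y : ℚ) = 0 := by
      intro y _
      rw [hinv]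
      simp
    rw [Finset.sum_congr rfl hz]
    simp [ha0]
  · -- n = m + 1
    obtain ⟨s, hs, ha, hb, hmem⟩ := hO
    have hNpos : 0 < m + 1 := Nat.succ_pos m
    -- rotation formula
    have rot : ∀ (x : Fin (m+1) → ℤ) (k : ℕ) (i : Fin (m+1)),
        τ^[k] x i = x (i + (k : Fin (m+1))) := by
      intro x k
      induction k generalizing x with
      | zero => intro i; simp
      | succ k ih =>
        intro i
        rw [Function.iterate_succ_apply, ih (τ x) i, hτ, finRotate_succ_apply]
        congr 1
        push_cast
        rw [add_assoc]
    have hper : ∀ x : Fin (m+1) → ℤ, τ^[m+1] x = x := by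
      intro x; funext i
      rw [rot, Fin.natCast_self, add_zero]
    have hmod : ∀ (k : ℕ) (x : Fin (m+1) → ℤ), τ^[k] x = τ^[k % (m+1)] x := by
      intro k x
      conv_lhs => rw [← Nat.mod_add_div k (m+1), Function.iterate_add_apply,
        Function.iterate_mul, Function.iterate_fixed (hper x) (k / (m+1))]
    have hOim : ∀ y, y ∈ O ↔ ∃ k < m + 1, τ^[k] s = y := by
      intro y
      rw [hmem]
      constructor
      · rintro ⟨k, hk⟩
        exact ⟨k % (m+1), Nat.mod_lt _ hNpos, by rw [← hmod, hk]⟩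
      · rintro ⟨k, _, hk⟩; exact ⟨k, hk⟩
    set c0 := ((Finset.range (m+1)).filter (fun k => τ^[k] s = s)).card with hc0
    have fiber_card : ∀ k0 : ℕ, k0 < m + 1 →
        ((Finset.range (m+1)).filter (fun k => τ^[k] s = τ^[k0] s)).card = c0 := by
      intro k0 hk0
      rw [hc0]
      apply Finset.card_bij' (fun k _ => (k + (m + 1 - k0)) % (m+1))
        (fun j _ => (j + k0) % (m+1))
      · intro k hk
        simp only [Finset.mem_filter, Finset.mem_range] at hk ⊢
        refine ⟨Nat.mod_lt _ hNpos, ?_⟩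
        calc τ^[(k + (m + 1 - k0)) % (m+1)] s
            = τ^[(m + 1 - k0) + k] s := by rw [← hmod, Nat.add_comm k (m + 1 - k0)]
          _ = τ^[m + 1 - k0] (τ^[k0] s) := by rw [Function.iterate_add_apply, hk.2]
          _ = s := by
              rw [← Function.iterate_add_apply,
                show m + 1 - k0 + k0 = m + 1 from by omega, hper]
      · intro j hj
        simp only [Finset.mem_filter, Finset.mem_range] at hj ⊢
        refine ⟨Nat.mod_lt _ hNpos, ?_⟩
        calc τ^[(j + k0) % (m+1)] s
            = τ^[k0 + j] s := by rw [← hmod, Nat.add_comm j k0]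
          _ = τ^[k0] s := by rw [Function.iterate_add_apply, hj.2]
      · intro k hk
        simp only [Finset.mem_filter, Finset.mem_range] at hk
        rw [Nat.mod_add_mod, show k + (m + 1 - k0) + k0 = k + (m+1) from by omega,
          Nat.add_mod_right, Nat.mod_eq_of_lt hk.1]
      · intro j hj
        simp only [Finset.mem_filter, Finset.mem_range] at hj
        rw [Nat.mod_add_mod, show j + k0 + (m + 1 - k0) = j + (m+1) from by omega,
          Nat.add_mod_right, Nat.mod_eq_of_lt hj.1]
    have key1 : ∀ g : (Fin (m+1) → ℤ) → ℕ,
        ∑ k ∈ Finset.range (m+1), g (τ^[k] s) = c0 * ∑ y ∈ O, g y := by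
      intro g
      rw [← Finset.sum_fiberwise_of_maps_to (g := fun k => τ^[k] s)
        (fun k _ => (hmem _).2 ⟨k, rfl⟩) (fun k => g (τ^[k] s))]
      rw [Finset.mul_sum]
      refine Finset.sum_congr rfl fun y hy => ?_
      obtain ⟨k0, hk0, hk0y⟩ := (hOim y).1 hy
      have hcg : ∀ k ∈ (Finset.range (m+1)).filter (fun k => τ^[k] s = y),
          g (τ^[k] s) = g y := by
        intro k hk
        rw [(Finset.mem_filter.1 hk).2]
      rw [Finset.sum_congr rfl hcg, Finset.sum_const, smul_eq_mul]
      congr 1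
      rw [← hk0y]
      exact fiber_card k0 hk0
    have hc0pos : 0 < c0 := by
      rw [hc0]
      refine Finset.card_pos.2 ⟨0, ?_⟩
      simp [Finset.mem_filter, hNpos]
    have hcard : m + 1 = c0 * O.card := by
      have := key1 (fun _ => 1)
      simpa using this
    -- the counting identity
    have hcore : 2 * ∑ k ∈ Finset.range (m+1), inv (τ^[k] s) = (m+1) * (b * a) := by
      have conv1 : ∑ k ∈ Finset.range (m+1), inv (τ^[k] s)
          = ∑ κ : Fin (m+1), ∑ p : Fin (m+1), ∑ q : Fin (m+1),
            (if p < q ∧ s (p + κ) = 1 ∧ s (q + κ) = -1 then (1:ℕ) else 0) := by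
        rw [← Fin.sum_univ_eq_sum_range (fun k => inv (τ^[k] s)) (m+1)]
        refine Finset.sum_congr rfl fun κ _ => ?_
        rw [hinv, Finset.card_filter, Fintype.sum_prod_type]
        refine Finset.sum_congr rfl fun p _ => Finset.sum_congr rfl fun q _ => ?_
        have hp : τ^[(κ:ℕ)] s p = s (p + κ) := by rw [rot]; congr 1; rw [Fin.cast_val_eq_self]
        have hq : τ^[(κ:ℕ)] s q = s (q + κ) := by rw [rot]; congr 1; rw [Fin.cast_val_eq_self]
        rw [hp, hq]
        refine if_congr (and_congr_right fun _ => ?_) rfl rfl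
        rcases hs (p + κ) with h1 | h1 <;> rcases hs (q + κ) with h2 | h2 <;>
          rw [h1, h2] <;> norm_num
      rw [conv1]
      exact core_count a b s hs ha hb
    -- assemble
    rw [key1 inv] at hcore
    have hmain : 2 * ∑ y ∈ O, inv y = O.card * (b * a) := by
      refine Nat.eq_of_mul_eq_mul_left hc0pos ?_
      calc c0 * (2 * ∑ y ∈ O, inv y) = 2 * (c0 * ∑ y ∈ O, inv y) := by ring
        _ = (m+1) * (b * a) := hcore
        _ = c0 * O.card * (b * a) := by rw [← hcard]
        _ = c0 * (O.card * (b * a)) := by ring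
    have hOpos : 0 < O.card := Finset.card_pos.2 ⟨s, (hmem s).2 ⟨0, rfl⟩⟩
    have hcast : (∑ y ∈ O, (inv y : ℚ)) = ((∑ y ∈ O, inv y : ℕ) : ℚ) := by push_cast; rfl
    rw [hcast]
    have hOQ : (O.card : ℚ) ≠ 0 := Nat.cast_ne_zero.2 hOpos.ne'
    rw [div_eq_div_iff hOQ (by norm_num : (2:ℚ) ≠ 0)]
    have hQ := congrArg (fun x : ℕ => (x : ℚ)) hmain
    push_cast at hQ ⊢
    linear_combination hQ
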